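/- arXiv:2501.03163 — 2 statements merged into one kernel-verified Lean document; each statement's English description precedes it below -/
import Mathlib

section
/- Let f : ℝ → ℝ be convex and suppose there exists a nonzero direction d ∈ ℝ such that the map s ↦ f(s·d) is bounded above on [0,∞). Then for every x ∈ ℝ, f(x + d) ≤ f(x). -/
theorem convex_bounded_ray_dir_nonincreasing
    (f : ℝ → ℝ) (hf : ConvexOn ℝ Set.univ f)
    (d : ℝ) (hd : d ≠ 0)
    (M : ℝ) (hM : ∀ s : ℝ, 0 ≤ s → f (s * d) ≤ M) :
    ∀ x : ℝ, f (x + d) ≤ f x := by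
  intro x
  refine le_of_forall_pos_le_add fun ε hε => ?_
  set t : ℝ := min 1 (min (ε / (|M - f x| + 1)) (1 / (|x / d| + 1))) with ht
  have hpos1 : (0:ℝ) < |M - f x| + 1 := by positivity
  have hpos2 : (0:ℝ) < |x / d| + 1 := by positivity
  have ht0 : 0 < t := by
    apply lt_min one_pos
    exact lt_min (by positivity) (by positivity)
  have ht1 : t ≤ 1 := min_le_left _ _
  have htε : t ≤ ε / (|M - f x| + 1) := le_trans (min_le_right _ _) (min_le_left _ _)
  have htx : t ≤ 1 / (|x / d| + 1) := le_trans (min_le_right _ _) (min_le_right _ _)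
  set s : ℝ := 1 / t + x / d with hs
  have hs0 : 0 ≤ s := by
    have h1 : |x / d| + 1 ≤ 1 / t := by
      rw [le_div_iff₀ ht0]
      calc (|x / d| + 1) * t ≤ (|x / d| + 1) * (1 / (|x / d| + 1)) := by
            exact mul_le_mul_of_nonneg_left htx (le_of_lt hpos2)
        _ = 1 := mul_one_div_cancel (ne_of_gt hpos2)
    have : -(x / d) ≤ |x / d| := neg_le_abs _
    rw [hs]; linarith
  have hcomb : (1 - t) • x + t • (s * d) = x + d := by
    have : t * (s * d) = d + t * x := by
      rw [hs]
      field_simp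
    simp only [smul_eq_mul]
    rw [this]; ring
  have hconv := hf.2 (Set.mem_univ x) (Set.mem_univ (s * d))
    (by linarith : (0:ℝ) ≤ 1 - t) (le_of_lt ht0) (by ring)
  rw [hcomb] at hconv
  have hMs : f (s * d) ≤ M := hM s hs0
  have h1 : f (x + d) ≤ (1 - t) * f x + t * M := by
    have := mul_le_mul_of_nonneg_left hMs (le_of_lt ht0)
    simp only [smul_eq_mul] at hconv
    linarith
  have h2 : t * (M - f x) ≤ ε := by
    calc t * (M - f x) ≤ t * |M - f x| := by
          exact mul_le_mul_of_nonneg_left (le_abs_self _) (le_of_lt ht0)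
      _ ≤ t * (|M - f x| + 1) := by nlinarith
      _ ≤ (ε / (|M - f x| + 1)) * (|M - f x| + 1) := by
          exact mul_le_mul_of_nonneg_right htε (le_of_lt hpos1)
      _ = ε := div_mul_cancel₀ _ (ne_of_gt hpos1)
  linarith
end

section
/- Let f : ℝ → ℝ be a proper closed convex function with f(0) = 0, and for t > 0 let v_t = prox_{tf}(tG) for a fixed real number G. Then the function t ↦ (v_t/t)² is non-increasing in t on (0, ∞). -/
/-- If `B - l*C ≤ A` for all `l ∈ (0,1]` with `C ≥ 0`, then `B ≤ A`. -/
lemma aux_lim_le {A B C : ℝ} (hC : 0 ≤ C)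
    (h : ∀ l : ℝ, 0 < l → l ≤ 1 → B - l * C ≤ A) : B ≤ A := by
  by_contra hAB
  push_neg at hAB
  have hpos : 0 < (B - A) / (C + 1) := div_pos (by linarith) (by linarith)
  have hl := h (min 1 ((B - A) / (C + 1))) (lt_min one_pos hpos) (min_le_left _ _)
  have hle : min 1 ((B - A) / (C + 1)) ≤ (B - A) / (C + 1) := min_le_right _ _
  have hlpos : 0 < min 1 ((B - A) / (C + 1)) := lt_min one_pos hpos
  have hmul : min 1 ((B - A) / (C + 1)) * (C + 1) ≤ B - A := by
    rw [← le_div_iff₀ (by positivity : (0:ℝ) < C + 1)]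
    exact hle
  nlinarith

/-- Subgradient inequality from minimality of the prox objective. -/
lemma aux_subgrad (f : ℝ → ℝ) (hf : ConvexOn ℝ Set.univ f) (G s : ℝ) (hs : 0 < s)
    (a : ℝ) (hmin : IsMinOn (fun u : ℝ => (s * G - u) ^ 2 / (2 * s) + f u) Set.univ a)
    (u : ℝ) : (u - a) * (s * G - a) ≤ s * (f u - f a) := by
  apply aux_lim_le (C := (u - a) ^ 2 / 2) (by positivity)
  intro lam hl0 hl1
  set w : ℝ := (1 - lam) * a + lam * u with hw
  have h1 : (s * G - a) ^ 2 / (2 * s) + f a ≤ (s * G - w) ^ 2 / (2 * s) + f w :=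
    hmin (Set.mem_univ w)
  have hconv : f w ≤ (1 - lam) * f a + lam * f u := by
    have := hf.2 (Set.mem_univ a) (Set.mem_univ u) (by linarith : (0:ℝ) ≤ 1 - lam)
      hl0.le (by ring)
    simpa [smul_eq_mul] using this
  have h2 : (s * G - a) ^ 2 / (2 * s) + f a ≤
      (s * G - w) ^ 2 / (2 * s) + ((1 - lam) * f a + lam * f u) := le_trans h1 (by linarith)
  have hne : (2 * s) ≠ 0 := by positivity
  have h3 : (s * G - a) ^ 2 + 2 * s * f a ≤
      (s * G - w) ^ 2 + 2 * s * ((1 - lam) * f a + lam * f u) := by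
    have h4 := mul_le_mul_of_nonneg_left h2 (show (0:ℝ) ≤ 2 * s by positivity)
    rw [mul_add, mul_add, mul_div_cancel₀ _ hne, mul_div_cancel₀ _ hne] at h4
    linarith
  have e : (s * G - w) ^ 2 =
      (s * G - a) ^ 2 - (2 * lam * (u - a) * (s * G - a) - lam ^ 2 * (u - a) ^ 2) := by
    rw [hw]; ring
  rw [e] at h3
  have hfin : (2 * lam) * ((u - a) * (s * G - a) - lam * ((u - a) ^ 2 / 2)) ≤
      (2 * lam) * (s * (f u - f a)) := by nlinarith
  have := le_of_mul_le_mul_left hfin (by linarith : (0:ℝ) < 2 * lam)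
  linarith

theorem prox_ratio_sq_antitone
    (f : ℝ → ℝ) (hf : ConvexOn ℝ Set.univ f) (hlsc : LowerSemicontinuous f)
    (hf0 : f 0 = 0) (G : ℝ) (v : ℝ → ℝ)
    (hv : ∀ t : ℝ, 0 < t →
      IsMinOn (fun u : ℝ => (t * G - u) ^ 2 / (2 * t) + f u) Set.univ (v t)) :
    AntitoneOn (fun t : ℝ => (v t / t) ^ 2) (Set.Ioi 0) := by
  intro s hs t ht hst
  simp only [Set.mem_Ioi] at hs ht
  set a := v s with ha
  set b := v t with hb
  set p := a / s with hp
  set q := b / t with hq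
  have hap : a = s * p := by rw [hp, mul_div_cancel₀ _ hs.ne']
  have hbq : b = t * q := by rw [hq, mul_div_cancel₀ _ ht.ne']
  have h1 : (b - a) * (s * G - a) ≤ s * (f b - f a) := aux_subgrad f hf G s hs a (hv s hs) b
  have h2 : (a - b) * (t * G - b) ≤ t * (f a - f b) := aux_subgrad f hf G t ht b (hv t ht) a
  have key : (t * q - s * p) * (q - p) ≤ 0 := by
    have h1' := mul_le_mul_of_nonneg_left h1 ht.le
    have h2' := mul_le_mul_of_nonneg_left h2 hs.le
    rw [hap, hbq] at h1' h2'
    have hst' : 0 < s * t := mul_pos hs ht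
    nlinarith [h1', h2']
  show (q) ^ 2 ≤ (p) ^ 2
  rcases eq_or_lt_of_le hst with h | h
  · rw [hp, hq, ha, hb, h]
  · have hA := mul_le_mul_of_nonneg_left key (by linarith : (0:ℝ) ≤ t - s)
    have hB := mul_le_mul_of_nonneg_left key (by linarith : (0:ℝ) ≤ t + s)
    have hC : (0:ℝ) ≤ t * (t + s) * (q - p) ^ 2 := by positivity
    have e1 : t * (t - s) * (q ^ 2 - p ^ 2) =
        (t - s) * ((t * q - s * p) * (q - p)) + (t + s) * ((t * q - s * p) * (q - p))
          - t * (t + s) * (q - p) ^ 2 := by ring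
    have hD : t * (t - s) * (q ^ 2 - p ^ 2) ≤ 0 := by rw [e1]; nlinarith
    have hpos : 0 < t * (t - s) := mul_pos ht (by linarith)
    nlinarith [hD, hpos]
end
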